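/- For every Kepler solution r : I → ℝ³, the eccentricity vector e(t) = (ṙ(t) × h(t))/μ − r(t)/|r(t)| is constant: for all t₁, t₂ ∈ I, e(t₁) = e(t₂). -/

import Mathlib

open scoped InnerProductSpace

/-- Cross product in ℝ³ (modelled as `EuclideanSpace ℝ (Fin 3)`). -/
noncomputable def cross3 (a b : EuclideanSpace ℝ (Fin 3)) : EuclideanSpace ℝ (Fin 3) :=
  (WithLp.equiv 2 (Fin 3 → ℝ)).symm
    ![a 1 * b 2 - a 2 * b 1, a 2 * b 0 - a 0 * b 2, a 0 * b 1 - a 1 * b 0]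

/-- The vector (x, y, z) ∈ ℝ³. -/
noncomputable def v3 (x y z : ℝ) : EuclideanSpace ℝ (Fin 3) :=
  (WithLp.equiv 2 (Fin 3 → ℝ)).symm ![x, y, z]

/-- For every Kepler solution, the eccentricity vector
e(t) = (ṙ(t) × h(t))/μ − r(t)/|r(t)| is constant. -/
lemma cross3_apply (a b : EuclideanSpace ℝ (Fin 3)) (i : Fin 3) :
    cross3 a b i = ![a 1 * b 2 - a 2 * b 1, a 2 * b 0 - a 0 * b 2, a 0 * b 1 - a 1 * b 0] i := rfl

-- triple product
lemma cross3_triple (a b c : EuclideanSpace ℝ (Fin 3)) :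
    cross3 a (cross3 b c) = ⟪a, c⟫_ℝ • b - ⟪a, b⟫_ℝ • c := by
  apply PiLp.ext
  intro i
  have h : ∀ x y : EuclideanSpace ℝ (Fin 3), ⟪x, y⟫_ℝ = x 0 * y 0 + x 1 * y 1 + x 2 * y 2 := by
    intro x y
    simp [PiLp.inner_apply, Fin.sum_univ_three, mul_comm]
  fin_cases i <;>
    simp [cross3_apply, h, PiLp.sub_apply, PiLp.smul_apply, smul_eq_mul] <;> ring

lemma cross3_self_smul (c : ℝ) (x : EuclideanSpace ℝ (Fin 3)) :
    cross3 x (c • x) = 0 := by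
  apply PiLp.ext
  intro i
  fin_cases i <;> simp [cross3_apply, PiLp.smul_apply, smul_eq_mul] <;> ring

lemma cross3_self (x : EuclideanSpace ℝ (Fin 3)) : cross3 x x = 0 := by
  simpa using cross3_self_smul 1 x

lemma cross3_smul_left (c : ℝ) (x y : EuclideanSpace ℝ (Fin 3)) :
    cross3 (c • x) y = c • cross3 x y := by
  apply PiLp.ext
  intro i
  fin_cases i <;> simp [cross3_apply, PiLp.smul_apply, smul_eq_mul] <;> ring

lemma HasDerivAt.cross3 {f g : ℝ → EuclideanSpace ℝ (Fin 3)} {f' g' : EuclideanSpace ℝ (Fin 3)}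
    {t : ℝ} (hf : HasDerivAt f f' t) (hg : HasDerivAt g g' t) :
    HasDerivAt (fun s => _root_.cross3 (f s) (g s))
      (_root_.cross3 f' (g t) + _root_.cross3 (f t) g') t := by
  set e := EuclideanSpace.equiv (Fin 3) ℝ with he
  have hfc : ∀ i : Fin 3, HasDerivAt (fun s => f s i) (f' i) t := by
    intro i
    have h1 : HasDerivAt (fun s => e (f s)) (e f') t := e.hasFDerivAt.comp_hasDerivAt t hf
    exact hasDerivAt_pi.1 h1 i
  have hgc : ∀ i : Fin 3, HasDerivAt (fun s => g s i) (g' i) t := by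
    intro i
    have h1 : HasDerivAt (fun s => e (g s)) (e g') t := e.hasFDerivAt.comp_hasDerivAt t hg
    exact hasDerivAt_pi.1 h1 i
  suffices h : HasDerivAt (fun s => e (_root_.cross3 (f s) (g s)))
      (e (_root_.cross3 f' (g t) + _root_.cross3 (f t) g')) t by
    have := e.symm.hasFDerivAt.comp_hasDerivAt t h
    simpa [Function.comp_def] using this
  apply hasDerivAt_pi.2
  intro i
  have heapp : ∀ (x : EuclideanSpace ℝ (Fin 3)) (j : Fin 3), e x j = x j := fun _ _ => rfl
  fin_cases i
  · convert (((hfc 1).fun_mul (hgc 2)).fun_sub ((hfc 2).fun_mul (hgc 1))) using 1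
    simp only [heapp, PiLp.add_apply, cross3_apply]
    simp
    ring
    change (_root_.cross3 f' (g t) + _root_.cross3 (f t) g') _ = _
    simp only [PiLp.add_apply, cross3_apply]
    simp
    ring
  · convert (((hfc 2).fun_mul (hgc 0)).fun_sub ((hfc 0).fun_mul (hgc 2))) using 1
    simp only [heapp, PiLp.add_apply, cross3_apply]
    simp
    ring
    change (_root_.cross3 f' (g t) + _root_.cross3 (f t) g') _ = _
    simp only [PiLp.add_apply, cross3_apply]
    simp
    ring
  · convert (((hfc 0).fun_mul (hgc 1)).fun_sub ((hfc 1).fun_mul (hgc 0))) using 1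
    simp only [heapp, PiLp.add_apply, cross3_apply]
    simp
    ring
    change (_root_.cross3 f' (g t) + _root_.cross3 (f t) g') _ = _
    simp only [PiLp.add_apply, cross3_apply]
    simp
    ring

lemma cross3_zero_right (a : EuclideanSpace ℝ (Fin 3)) : cross3 a 0 = 0 := by
  apply PiLp.ext
  intro i
  fin_cases i <;> simp [cross3_apply]

lemma hasDerivAt_norm3 {r : ℝ → EuclideanSpace ℝ (Fin 3)} {r' : EuclideanSpace ℝ (Fin 3)} {t : ℝ}
    (hr : HasDerivAt r r' t) (h0 : r t ≠ 0) :
    HasDerivAt (fun s => ‖r s‖) (⟪r t, r'⟫_ℝ / ‖r t‖) t := by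
  have hi : HasDerivAt (fun s => ⟪r s, r s⟫_ℝ) (⟪r t, r'⟫_ℝ + ⟪r', r t⟫_ℝ) t := hr.inner ℝ hr
  have hne : ⟪r t, r t⟫_ℝ ≠ 0 := inner_self_ne_zero.2 h0
  have hsq := (Real.hasDerivAt_sqrt hne).comp t hi
  have heq : (fun s => Real.sqrt ⟪r s, r s⟫_ℝ) = fun s => ‖r s‖ := by
    funext s
    rw [real_inner_self_eq_norm_sq, Real.sqrt_sq (norm_nonneg _)]
  have hnorm0 : ‖r t‖ ≠ 0 := norm_ne_zero_iff.2 h0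
  rw [Function.comp_def, heq] at hsq
  refine hsq.congr_deriv ?_
  rw [real_inner_comm r' (r t), real_inner_self_eq_norm_sq, Real.sqrt_sq (norm_nonneg _)]
  field_simp
  ring


theorem eccentricity_vector_constant
(μ : ℝ) (hμ : 0 < μ) (I : Set ℝ) (hIopen : IsOpen I) (hIconn : I.OrdConnected)
    (r : ℝ → EuclideanSpace ℝ (Fin 3))
    (hdiff : ∀ t ∈ I, DifferentiableAt ℝ r t)
    (hdiff' : ∀ t ∈ I, DifferentiableAt ℝ (deriv r) t)
    (hne : ∀ t ∈ I, r t ≠ 0)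
    (hode : ∀ t ∈ I, deriv (deriv r) t = -(μ / ‖r t‖ ^ 3) • r t)
    (t₁ t₂ : ℝ) (ht₁ : t₁ ∈ I) (ht₂ : t₂ ∈ I) :
    μ⁻¹ • cross3 (deriv r t₁) (cross3 (r t₁) (deriv r t₁)) - ‖r t₁‖⁻¹ • r t₁ =
      μ⁻¹ • cross3 (deriv r t₂) (cross3 (r t₂) (deriv r t₂)) - ‖r t₂‖⁻¹ • r t₂ := by
  set E : ℝ → EuclideanSpace ℝ (Fin 3) :=
    fun t => μ⁻¹ • cross3 (deriv r t) (cross3 (r t) (deriv r t)) - ‖r t‖⁻¹ • r t with hE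
  have key : ∀ t ∈ I, HasDerivAt E 0 t := by
    intro t ht
    have hr : HasDerivAt r (deriv r t) t := (hdiff t ht).hasDerivAt
    have hr' : HasDerivAt (deriv r) (deriv (deriv r) t) t := (hdiff' t ht).hasDerivAt
    have hn0 : ‖r t‖ ≠ 0 := norm_ne_zero_iff.2 (hne t ht)
    -- derivative of h = r × ṙ is zero
    have h1 : HasDerivAt (fun s => cross3 (r s) (deriv r s))
        (cross3 (deriv r t) (deriv r t) + cross3 (r t) (deriv (deriv r) t)) t := hr.cross3 hr'
    have h1z : cross3 (deriv r t) (deriv r t) + cross3 (r t) (deriv (deriv r) t) = 0 := by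
      rw [hode t ht, cross3_self_smul, cross3_self]; simp
    rw [h1z] at h1
    have h2 : HasDerivAt (fun s => cross3 (deriv r s) (cross3 (r s) (deriv r s)))
        (cross3 (deriv (deriv r) t) (cross3 (r t) (deriv r t)) + cross3 (deriv r t) 0) t :=
      hr'.cross3 h1
    rw [cross3_zero_right, add_zero] at h2
    have h3 : HasDerivAt (fun s => μ⁻¹ • cross3 (deriv r s) (cross3 (r s) (deriv r s)))
        (μ⁻¹ • cross3 (deriv (deriv r) t) (cross3 (r t) (deriv r t))) t := h2.const_smul μ⁻¹
    have hninv : HasDerivAt (fun s => ‖r s‖⁻¹)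
        (-(⟪r t, deriv r t⟫_ℝ / ‖r t‖) / ‖r t‖ ^ 2) t := (hasDerivAt_norm3 hr (hne t ht)).inv hn0
    have h4 : HasDerivAt (fun s => ‖r s‖⁻¹ • r s)
        (‖r t‖⁻¹ • deriv r t + (-(⟪r t, deriv r t⟫_ℝ / ‖r t‖) / ‖r t‖ ^ 2) • r t) t :=
      hninv.smul hr
    have h5 := h3.sub h4
    refine h5.congr_deriv ?_
    rw [hode t ht, cross3_smul_left, cross3_triple, real_inner_self_eq_norm_sq]
    have : ‖r t‖ ≠ 0 := hn0
    match_scalars <;> field_simp <;> ring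
  have hconv : Convex ℝ I := convex_iff_ordConnected.mpr hIconn
  have hdOn : DifferentiableOn ℝ E I := fun t ht =>
    ((key t ht).differentiableAt).differentiableWithinAt
  exact hconv.is_const_of_fderivWithin_eq_zero hdOn
    (fun t ht => by
      rw [fderivWithin_of_isOpen hIopen ht, (key t ht).hasFDerivAt.fderiv]
      ext x
      simp) ht₁ ht₂
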